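/- The principal congruence subgroup of level two, Γ₂ = {A ∈ GL_r(ℤ) : A ≡ I (mod 2)}, is generated by the squares X_{ij}² of the elementary matrices (i ≠ j) together with the diagonal matrices T_i that agree with the identity except for a −1 in the i-th diagonal entry. -/

import Mathlib

/-- The elementary matrix `X i j` in `SL_r(ℤ)`: identity plus an extra 1 in position (i,j). -/
def X {r : ℕ} (i j : Fin r) (h : i ≠ j) : Matrix.SpecialLinearGroup (Fin r) ℤ :=
  ⟨Matrix.transvection i j 1, Matrix.det_transvection_of_ne i j h 1⟩

/-- The diagonal matrix `T i` in `GL_r(ℤ)`: identity with a `-1` in the i-th diagonal entry. -/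
def T {r : ℕ} (i : Fin r) : GL (Fin r) ℤ :=
  ⟨Matrix.diagonal (fun k => if k = i then -1 else 1),
   Matrix.diagonal (fun k => if k = i then -1 else 1),
   by
    ext p q
    by_cases hp : p = i <;> by_cases hq : q = i <;> by_cases h : p = q <;>
      simp_all [Matrix.diagonal_mul_diagonal, Matrix.diagonal_apply, Matrix.one_apply],
   by
    ext p q
    by_cases hp : p = i <;> by_cases hq : q = i <;> by_cases h : p = q <;>
      simp_all [Matrix.diagonal_mul_diagonal, Matrix.diagonal_apply, Matrix.one_apply]⟩

/-- The principal congruence subgroup of level 2 in `GL_r(ℤ)`, as the kernel of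
reduction modulo 2. -/
def Gamma2 (r : ℕ) : Subgroup (GL (Fin r) ℤ) :=
  (Units.map ((Int.castRingHom (ZMod 2)).mapMatrix.toMonoidHom)).ker

open Matrix

namespace G2

variable {r : ℕ}

/-- generating set -/
def genSet (r : ℕ) : Set (GL (Fin r) ℤ) :=
  {A | ∃ i j : Fin r, ∃ h : i ≠ j, A = (X i j h).toGL ^ 2} ∪ {A | ∃ i : Fin r, A = T i}

def H (r : ℕ) : Subgroup (GL (Fin r) ℤ) := Subgroup.closure (genSet r)

/-- transvection as a GL element -/
def tGL (i j : Fin r) (h : i ≠ j) (c : ℤ) : GL (Fin r) ℤ :=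
  ⟨transvection i j c, transvection i j (-c),
   by rw [transvection_mul_transvection_same _ _ h, add_neg_cancel, transvection_zero],
   by rw [transvection_mul_transvection_same _ _ h, neg_add_cancel, transvection_zero]⟩

@[simp] lemma tGL_val (i j : Fin r) (h : i ≠ j) (c : ℤ) :
    (tGL i j h c).val = transvection i j c := rfl

lemma tGL_mul (i j : Fin r) (h : i ≠ j) (c d : ℤ) :
    tGL i j h c * tGL i j h d = tGL i j h (c + d) := by
  ext1
  simp [transvection_mul_transvection_same _ _ h]

lemma tGL_zero (i j : Fin r) (h : i ≠ j) : tGL i j h 0 = 1 := by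
  ext1; simp [transvection_zero]

lemma tGL_zpow (i j : Fin r) (h : i ≠ j) (c : ℤ) (t : ℤ) :
    tGL i j h c ^ t = tGL i j h (t * c) := by
  induction t using Int.induction_on with
  | zero => simp [tGL_zero]
  | succ k ih => rw [_root_.zpow_add_one, ih, tGL_mul]; ring_nf
  | pred k ih =>
      rw [_root_.zpow_sub_one, ih]
      have : tGL i j h ((-↑k - 1) * c) * tGL i j h c = tGL i j h ((-↑k) * c) := by
        rw [tGL_mul]; ring_nf
      rw [← this, mul_assoc, mul_inv_cancel, mul_one]

lemma X_sq_eq (i j : Fin r) (h : i ≠ j) : (X i j h).toGL ^ 2 = tGL i j h 2 := by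
  ext1
  show ((X i j h).toGL ^ 2).val = _
  rw [Units.val_pow_eq_pow_val]
  show ((X i j h).val) ^ 2 = _
  rw [sq, X]
  simp [transvection_mul_transvection_same _ _ h]

lemma tGL_even_mem (i j : Fin r) (h : i ≠ j) (t : ℤ) : tGL i j h (2 * t) ∈ H r := by
  have h2 : tGL i j h 2 ∈ H r := by
    rw [← X_sq_eq]
    exact Subgroup.subset_closure (Or.inl ⟨i, j, h, rfl⟩)
  have := Subgroup.zpow_mem (H r) h2 t
  rwa [tGL_zpow, mul_comm] at this

lemma T_mem (i : Fin r) : T i ∈ H r := Subgroup.subset_closure (Or.inr ⟨i, rfl⟩)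



lemma intCast_zmod2_eq_zero_iff (x : ℤ) : (x : ZMod 2) = 0 ↔ Even x := by
  rw [ZMod.intCast_zmod_eq_zero_iff_dvd]
  norm_num
  rw [Int.even_iff]
  omega

lemma intCast_zmod2_eq_one_iff (x : ℤ) : (x : ZMod 2) = 1 ↔ Odd x := by
  constructor
  · intro hx
    rcases Int.even_or_odd x with he | ho
    · rw [(intCast_zmod2_eq_zero_iff x).2 he] at hx; exact absurd hx (by decide)
    · exact ho
  · rintro ⟨k, rfl⟩
    push_cast
    ring_nf
    simp [show ((2:ZMod 2)) = 0 from rfl]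

lemma mem_gamma2_iff (A : GL (Fin r) ℤ) :
    A ∈ Gamma2 r ↔ (∀ i, Odd (A.val i i)) ∧ ∀ i j : Fin r, i ≠ j → Even (A.val i j) := by
  rw [Gamma2, MonoidHom.mem_ker, ← Units.val_eq_one]
  have hval : ((Units.map ((Int.castRingHom (ZMod 2)).mapMatrix.toMonoidHom)) A).val
      = (A.val).map (fun x : ℤ => (x : ZMod 2)) := rfl
  rw [hval]
  constructor
  · intro h
    constructor
    · intro i
      have := congrFun (congrFun h i) i
      simp [Matrix.map_apply, Matrix.one_apply] at this
      exact (intCast_zmod2_eq_one_iff _).1 this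
    · intro i j hij
      have := congrFun (congrFun h i) j
      simp [Matrix.map_apply, Matrix.one_apply, hij] at this
      exact (intCast_zmod2_eq_zero_iff _).1 this
  · rintro ⟨hd, ho⟩
    ext i j
    by_cases hij : i = j
    · subst hij
      simp [Matrix.map_apply, Matrix.one_apply, (intCast_zmod2_eq_one_iff _).2 (hd i)]
    · simp [Matrix.map_apply, Matrix.one_apply, hij, (intCast_zmod2_eq_zero_iff _).2 (ho i j hij)]

lemma H_le_gamma2 : H r ≤ Gamma2 r := by
  rw [H, Subgroup.closure_le]
  rintro A (⟨i, j, h, rfl⟩ | ⟨i, rfl⟩)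
  · rw [SetLike.mem_coe, X_sq_eq i j h, mem_gamma2_iff]
    constructor
    · intro k
      simp [transvection, Matrix.one_apply, Matrix.single, Ne.symm, h]
      by_cases hk : k = i <;> by_cases hk2 : k = j <;>
        simp_all [Int.odd_iff, Ne.symm h] <;> split <;> omega
    · intro a b hab
      simp [transvection, Matrix.one_apply, Matrix.single, hab]
      by_cases ha : a = i <;> by_cases hb : b = j <;> simp_all <;>
        split <;> simp
  · rw [SetLike.mem_coe, mem_gamma2_iff]
    constructor
    · intro k
      show Odd (Matrix.diagonal _ k k)
      by_cases hk : k = i <;> simp [Matrix.diagonal_apply, hk] <;> decide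
    · intro a b hab
      show Even (Matrix.diagonal _ a b)
      simp [Matrix.diagonal_apply, hab]

lemma odd_diag {A : GL (Fin r) ℤ} (hA : A ∈ Gamma2 r) (i : Fin r) : Odd (A.val i i) :=
  ((mem_gamma2_iff A).1 hA).1 i

lemma even_off {A : GL (Fin r) ℤ} (hA : A ∈ Gamma2 r) {i j : Fin r} (h : i ≠ j) :
    Even (A.val i j) := ((mem_gamma2_iff A).1 hA).2 i j h


lemma natAbs_ne_of_even_odd {x y : ℤ} (hx : Even x) (hy : Odd y) : x.natAbs ≠ y.natAbs := by
  rcases hx with ⟨u, rfl⟩; rcases hy with ⟨v, rfl⟩; omega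

lemma round_step (a x : ℤ) (ha : a ≠ 0) : ∃ t : ℤ, (x + 2*t*a).natAbs ≤ a.natAbs := by
  rcases lt_or_gt_of_ne ha with hneg | hpos
  · obtain ⟨t, ht⟩ : ∃ t : ℤ, (x + 2*t*(-a)).natAbs ≤ (-a).natAbs := by
      set b := -a with hb
      have hbpos : 0 < b := by omega
      refine ⟨-((x + b)/(2*b)), ?_⟩
      have h1 : 0 ≤ (x+b) % (2*b) := Int.emod_nonneg _ (by omega)
      have h2 : (x+b) % (2*b) < 2*b := Int.emod_lt_of_pos _ (by omega)
      have h3 : (x+b) % (2*b) = (x+b) - (2*b)*((x+b)/(2*b)) := by rw [Int.emod_def]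
      have he : x + 2*(-((x + b)/(2*b)))*b = (x+b) % (2*b) - b := by rw [h3]; ring
      rw [he]; omega
    exact ⟨-t, by rw [show x + 2*(-t)*a = x + 2*t*(-a) by ring]; rwa [Int.natAbs_neg] at ht⟩
  · refine ⟨-((x + a)/(2*a)), ?_⟩
    have h1 : 0 ≤ (x+a) % (2*a) := Int.emod_nonneg _ (by omega)
    have h2 : (x+a) % (2*a) < 2*a := Int.emod_lt_of_pos _ (by omega)
    have h3 : (x+a) % (2*a) = (x+a) - (2*a)*((x+a)/(2*a)) := by rw [Int.emod_def]
    have he : x + 2*(-((x + a)/(2*a)))*a = (x+a) % (2*a) - a := by rw [h3]; ring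
    rw [he]; omega

lemma pair_clear (k : Fin (r+1)) (hk : k ≠ Fin.last r) :
    ∀ n : ℕ, ∀ A : GL (Fin (r+1)) ℤ, A ∈ Gamma2 (r+1) →
    (A.val k (Fin.last r)).natAbs + (A.val (Fin.last r) (Fin.last r)).natAbs ≤ n →
    ∃ P ∈ H (r+1), (P*A).val k (Fin.last r) = 0 ∧
      ∀ m : Fin (r+1), m ≠ k → m ≠ Fin.last r →
        (P*A).val m (Fin.last r) = A.val m (Fin.last r) := by
  intro n
  induction n using Nat.strong_induction_on with
  | _ n ih =>
  intro A hA hn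
  set L := Fin.last r with hL
  by_cases hb0 : A.val k L = 0
  · exact ⟨1, one_mem _, by simpa using hb0, fun m _ _ => by simp⟩
  have hodd : Odd (A.val L L) := odd_diag hA L
  have heven : Even (A.val k L) := even_off hA hk
  have ha0 : A.val L L ≠ 0 := by
    intro h0; rw [h0] at hodd; exact (Int.not_odd_iff_even.2 Even.zero) hodd
  by_cases hcase : (A.val L L).natAbs ≤ (A.val k L).natAbs
  · -- reduce b = A k L using pivot a = A L L
    obtain ⟨t, ht⟩ := round_step (A.val L L) (A.val k L) ha0
    set P1 := tGL k L hk (2*t) with hP1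
    have hP1H : P1 ∈ H (r+1) := tGL_even_mem k L hk t
    have hkLval : (P1*A).val k L = A.val k L + 2*t*(A.val L L) := by
      rw [Units.val_mul, hP1, tGL_val, transvection_mul_apply_same]
    have hother : ∀ m : Fin (r+1), m ≠ k → (P1*A).val m L = A.val m L := by
      intro m hm
      rw [Units.val_mul, hP1, tGL_val, transvection_mul_apply_of_ne _ _ _ _ hm]
    have heven' : Even (A.val k L + 2*t*(A.val L L)) := by
      rcases heven with ⟨u, hu⟩; exact ⟨u + t*(A.val L L), by rw [hu]; ring⟩
    have hlt : (A.val k L + 2*t*(A.val L L)).natAbs < (A.val k L).natAbs :=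
      lt_of_lt_of_le (lt_of_le_of_ne ht (natAbs_ne_of_even_odd heven' hodd)) hcase
    have hA1 : P1 * A ∈ Gamma2 (r+1) := mul_mem (H_le_gamma2 hP1H) hA
    have hmeas : ((P1*A).val k L).natAbs + ((P1*A).val L L).natAbs <
        (A.val k L).natAbs + (A.val L L).natAbs := by
      rw [hkLval, hother L (Ne.symm hk)]
      omega
    obtain ⟨P', hP'H, hP'0, hP'pres⟩ :=
      ih _ (lt_of_lt_of_le hmeas hn) (P1 * A) hA1 le_rfl
    refine ⟨P' * P1, mul_mem hP'H hP1H, ?_, ?_⟩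
    · rw [mul_assoc]; exact hP'0
    · intro m hmk hmL
      rw [mul_assoc, hP'pres m hmk hmL, hother m hmk]
  · -- reduce a = A L L using pivot b = A k L
    obtain ⟨t, ht⟩ := round_step (A.val k L) (A.val L L) hb0
    set P1 := tGL L k (Ne.symm hk) (2*t) with hP1
    have hP1H : P1 ∈ H (r+1) := tGL_even_mem L k (Ne.symm hk) t
    have hLLval : (P1*A).val L L = A.val L L + 2*t*(A.val k L) := by
      rw [Units.val_mul, hP1, tGL_val, transvection_mul_apply_same]
    have hother : ∀ m : Fin (r+1), m ≠ L → (P1*A).val m L = A.val m L := by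
      intro m hm
      rw [Units.val_mul, hP1, tGL_val, transvection_mul_apply_of_ne _ _ _ _ hm]
    have hodd' : Odd (A.val L L + 2*t*(A.val k L)) := by
      rcases hodd with ⟨u, hu⟩; exact ⟨u + t*(A.val k L), by rw [hu]; ring⟩
    have hlt : (A.val L L + 2*t*(A.val k L)).natAbs < (A.val k L).natAbs :=
      lt_of_le_of_ne ht (fun h => (natAbs_ne_of_even_odd heven hodd') h.symm)
    have hA1 : P1 * A ∈ Gamma2 (r+1) := mul_mem (H_le_gamma2 hP1H) hA
    have hmeas : ((P1*A).val k L).natAbs + ((P1*A).val L L).natAbs <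
        (A.val k L).natAbs + (A.val L L).natAbs := by
      rw [hLLval, hother k hk]
      omega
    obtain ⟨P', hP'H, hP'0, hP'pres⟩ :=
      ih _ (lt_of_lt_of_le hmeas hn) (P1 * A) hA1 le_rfl
    refine ⟨P' * P1, mul_mem hP'H hP1H, ?_, ?_⟩
    · rw [mul_assoc, hP'0]
    · intro m hmk hmL
      rw [mul_assoc, hP'pres m hmk hmL, hother m hmL]

lemma col_clear (A : GL (Fin (r+1)) ℤ) (hA : A ∈ Gamma2 (r+1)) :
    ∃ P ∈ H (r+1), ∀ k, k ≠ Fin.last r → (P*A).val k (Fin.last r) = 0 := by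
  set L := Fin.last r with hL
  suffices h : ∀ s : Finset (Fin (r+1)), ∃ P ∈ H (r+1),
      ∀ k ∈ s, k ≠ L → (P*A).val k L = 0 by
    obtain ⟨P, hP, hP0⟩ := h Finset.univ
    exact ⟨P, hP, fun k hk => hP0 k (Finset.mem_univ k) hk⟩
  intro s
  induction s using Finset.induction_on with
  | empty => exact ⟨1, one_mem _, fun k hk => absurd hk (Finset.notMem_empty k)⟩
  | @insert a s ha ihs =>
    obtain ⟨P, hP, hP0⟩ := ihs
    by_cases haL : a = L
    · exact ⟨P, hP, fun k hk hkL => hP0 k (by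
        rcases Finset.mem_insert.1 hk with h | h
        · exact absurd (h.trans haL) hkL
        · exact h) hkL⟩
    · have hPA : P * A ∈ Gamma2 (r+1) := mul_mem (H_le_gamma2 hP) hA
      obtain ⟨P2, hP2, hP20, hP2pres⟩ :=
        pair_clear a haL ((((P*A)).val a L).natAbs + (((P*A)).val L L).natAbs)
          (P*A) hPA le_rfl
      refine ⟨P2 * P, mul_mem hP2 hP, ?_⟩
      intro k hk hkL
      rcases Finset.mem_insert.1 hk with h | h
      · subst h; rw [mul_assoc]; exact hP20
      · have hka : k ≠ a := fun hEq => ha (hEq ▸ h)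
        rw [mul_assoc, hP2pres k hka hkL]
        exact hP0 k h hkL

lemma row_clear (B : GL (Fin (r+1)) ℤ) (hB : B ∈ Gamma2 (r+1))
    (hcol : ∀ k, k ≠ Fin.last r → B.val k (Fin.last r) = 0)
    (hdiag : B.val (Fin.last r) (Fin.last r) = 1) :
    ∃ Q ∈ H (r+1), (∀ k, k ≠ Fin.last r → (B*Q).val (Fin.last r) k = 0) ∧
      (∀ k, (B*Q).val k (Fin.last r) = B.val k (Fin.last r)) := by
  set L := Fin.last r with hL
  suffices h : ∀ s : Finset (Fin (r+1)), ∃ Q ∈ H (r+1),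
      (∀ k ∈ s, k ≠ L → (B*Q).val L k = 0) ∧
      (∀ k, (B*Q).val k L = B.val k L) by
    obtain ⟨Q, hQ, hQ0, hQc⟩ := h Finset.univ
    exact ⟨Q, hQ, fun k hk => hQ0 k (Finset.mem_univ k) hk, hQc⟩
  intro s
  induction s using Finset.induction_on with
  | empty => exact ⟨1, one_mem _, fun k hk => absurd hk (Finset.notMem_empty k),
      fun k => by simp⟩
  | @insert a s ha ihs =>
    obtain ⟨Q, hQ, hQ0, hQc⟩ := ihs
    by_cases haL : a = L
    · refine ⟨Q, hQ, fun k hk hkL => hQ0 k ?_ hkL, hQc⟩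
      rcases Finset.mem_insert.1 hk with h | h
      · exact absurd (h.trans haL) hkL
      · exact h
    · have hBQ : B * Q ∈ Gamma2 (r+1) := mul_mem hB (H_le_gamma2 hQ)
      obtain ⟨t, htval⟩ := even_off hBQ (show L ≠ a from Ne.symm haL)
      -- (B*Q).val L a = t + t = 2t ; use c = -(2t)
      have hLa : Ne.symm haL = (show L ≠ a from Ne.symm haL) := rfl
      set c : ℤ := -(t + t) with hc
      set Q2 := tGL L a (Ne.symm haL) c with hQ2
      have hQ2H : Q2 ∈ H (r+1) := by
        have : c = 2 * (-t) := by rw [hc]; ring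
        rw [hQ2, this]; exact tGL_even_mem _ _ _ _
      refine ⟨Q * Q2, mul_mem hQ hQ2H, ?_, ?_⟩
      · intro k hk hkL
        rw [← mul_assoc]
        rcases Finset.mem_insert.1 hk with h | h
        · subst h
          rw [Units.val_mul, hQ2, tGL_val, mul_transvection_apply_same]
          rw [hQc L, hdiag, htval, hc]
          ring
        · have hka : k ≠ a := fun hEq => ha (hEq ▸ h)
          rw [Units.val_mul, hQ2, tGL_val, mul_transvection_apply_of_ne _ _ _ _ hka]
          exact hQ0 k h hkL
      · intro k
        rw [← mul_assoc, Units.val_mul, hQ2, tGL_val,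
          mul_transvection_apply_of_ne _ _ _ _ (Ne.symm haL), hQc]

lemma pivot_pm_one (A : GL (Fin (r+1)) ℤ)
    (hcol : ∀ k, k ≠ Fin.last r → A.val k (Fin.last r) = 0) :
    A.val (Fin.last r) (Fin.last r) = 1 ∨ A.val (Fin.last r) (Fin.last r) = -1 := by
  set L := Fin.last r with hL
  have hdetU : IsUnit (A.val).det := (Matrix.isUnit_iff_isUnit_det _).1 ⟨A, rfl⟩
  have hdet : (A.val).det = ∑ i : Fin (r+1),
      (-1)^((i:ℕ) + (L:ℕ)) * A.val i L * ((A.val).submatrix i.succAbove L.succAbove).det :=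
    det_succ_column _ _
  rw [Finset.sum_eq_single L (fun i _ hiL => by rw [hcol i hiL]; ring)
    (fun h => absurd (Finset.mem_univ L) h)] at hdet
  have hdvd : A.val L L ∣ (A.val).det := by
    rw [hdet]
    exact ⟨(-1)^((L:ℕ)+(L:ℕ)) * ((A.val).submatrix L.succAbove L.succAbove).det, by ring⟩
  have : IsUnit (A.val L L) := isUnit_of_dvd_unit hdvd hdetU
  exact Int.isUnit_iff.1 this

lemma reduce (A : GL (Fin (r+1)) ℤ) (hA : A ∈ Gamma2 (r+1)) :
    ∃ P ∈ H (r+1), ∃ Q ∈ H (r+1),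
      (P*A*Q).val (Fin.last r) (Fin.last r) = 1 ∧
      (∀ k, k ≠ Fin.last r → (P*A*Q).val k (Fin.last r) = 0) ∧
      (∀ k, k ≠ Fin.last r → (P*A*Q).val (Fin.last r) k = 0) := by
  set L := Fin.last r with hL
  obtain ⟨P0, hP0, hcol0⟩ := col_clear A hA
  rcases pivot_pm_one (P0*A) hcol0 with hd | hd
  · -- already 1
    obtain ⟨Q, hQ, hrow, hcolpres⟩ := row_clear (P0*A)
      (mul_mem (H_le_gamma2 hP0) hA) hcol0 hd
    refine ⟨P0, hP0, Q, hQ, ?_, ?_, ?_⟩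
    · rw [hcolpres L]; exact hd
    · intro k hk; rw [hcolpres k]; exact hcol0 k hk
    · exact hrow
  · -- multiply by T L
    set A2 := T L * (P0 * A) with hA2
    have hTval : (T L).val = Matrix.diagonal (fun k => if k = L then (-1:ℤ) else 1) := rfl
    have hA2e : ∀ p q, A2.val p q
        = (if p = L then (-1:ℤ) else 1) * (P0*A).val p q := by
      intro p q
      rw [hA2, Units.val_mul, hTval, Matrix.diagonal_mul]
    have hcol2 : ∀ k, k ≠ L → A2.val k L = 0 := by
      intro k hk; rw [hA2e, hcol0 k hk, mul_zero]
    have hdiag2 : A2.val L L = 1 := by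
      rw [hA2e, hd]; simp
    have hA2G : A2 ∈ Gamma2 (r+1) :=
      mul_mem (H_le_gamma2 (T_mem L)) (mul_mem (H_le_gamma2 hP0) hA)
    obtain ⟨Q, hQ, hrow, hcolpres⟩ := row_clear A2 hA2G hcol2 hdiag2
    refine ⟨T L * P0, mul_mem (T_mem L) hP0, Q, hQ, ?_, ?_, ?_⟩
    · rw [mul_assoc (T L) P0 A, ← hA2, hcolpres L]; exact hdiag2
    · intro k hk; rw [mul_assoc (T L) P0 A, ← hA2, hcolpres k]; exact hcol2 k hk
    · intro k hk; rw [mul_assoc (T L) P0 A, ← hA2]; exact hrow k hk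

/-- embed an r×r matrix into (r+1)×(r+1) with a 1 in the corner -/
def embMat (M : Matrix (Fin r) (Fin r) ℤ) : Matrix (Fin (r+1)) (Fin (r+1)) ℤ :=
  (fromBlocks M 0 0 (1 : Matrix (Fin 1) (Fin 1) ℤ)).submatrix
    (finSumFinEquiv.symm : Fin (r+1) → Fin r ⊕ Fin 1)
    (finSumFinEquiv.symm : Fin (r+1) → Fin r ⊕ Fin 1)

lemma embMat_mul (M N : Matrix (Fin r) (Fin r) ℤ) :
    embMat (M * N) = embMat M * embMat N := by
  rw [embMat, embMat, embMat]
  rw [show (⇑finSumFinEquiv.symm : Fin (r+1) → Fin r ⊕ Fin 1)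
    = ⇑(finSumFinEquiv.symm : Fin (r+1) ≃ Fin r ⊕ Fin 1) from rfl]
  rw [Matrix.submatrix_mul_equiv _ _ _ (finSumFinEquiv.symm : Fin (r+1) ≃ Fin r ⊕ Fin 1) _]
  congr 1
  rw [fromBlocks_multiply]
  congr 1 <;> simp

lemma embMat_one : embMat (1 : Matrix (Fin r) (Fin r) ℤ) = 1 := by
  rw [embMat, fromBlocks_one]
  exact submatrix_one_equiv _

/-- the embedding homomorphism GL_r → GL_{r+1} -/
def embed : GL (Fin r) ℤ →* GL (Fin (r+1)) ℤ where
  toFun A := ⟨embMat A.val, embMat (A⁻¹).val,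
    by rw [← embMat_mul, ← Units.val_mul, mul_inv_cancel, Units.val_one, embMat_one],
    by rw [← embMat_mul, ← Units.val_mul, inv_mul_cancel, Units.val_one, embMat_one]⟩
  map_one' := by ext1; exact embMat_one
  map_mul' A B := by ext1; exact embMat_mul _ _

@[simp] lemma embed_val (A : GL (Fin r) ℤ) : (embed A).val = embMat A.val := rfl

lemma finSum_inr_eq_last : finSumFinEquiv (Sum.inr (0 : Fin 1)) = Fin.last r := by
  rw [finSumFinEquiv_apply_right]; ext; simp

lemma embMat_apply_left (M : Matrix (Fin r) (Fin r) ℤ) (i j : Fin r) :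
    embMat M (finSumFinEquiv (Sum.inl i)) (finSumFinEquiv (Sum.inl j)) = M i j := by
  simp [embMat, Matrix.submatrix_apply]

lemma embed_transvection (i j : Fin r) (h : i ≠ j) (c : ℤ) :
    embMat (transvection i j c)
      = transvection (finSumFinEquiv (Sum.inl i)) (finSumFinEquiv (Sum.inl j)) c := by
  ext p q
  obtain ⟨p', rfl⟩ := finSumFinEquiv.surjective p
  obtain ⟨q', rfl⟩ := finSumFinEquiv.surjective q
  have f1 : ∀ a b : Fin r, (Fin.castAdd 1 a = Fin.castAdd 1 b) ↔ a = b := by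
    intro a b; simp [Fin.ext_iff]
  have f2 : ∀ (a : Fin r) (z : Fin 1), Fin.castAdd 1 a ≠ Fin.natAdd r z := by
    intro a z; simp [Fin.ext_iff]; omega
  have f3 : ∀ z w : Fin 1, Fin.natAdd r z = Fin.natAdd r w := by
    intro z w; simp [Fin.ext_iff]
  rcases p' with a | z <;> rcases q' with b | w <;>
    simp [embMat, Matrix.submatrix_apply, transvection, Matrix.one_apply,
      Matrix.single, fromBlocks, f1, f2, f3, Ne.symm (f2 _ _)]

lemma embed_T_mat (i : Fin r) :
    embMat ((T i).val) = (T (finSumFinEquiv (Sum.inl i))).val := by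
  have f1 : ∀ a b : Fin r, (Fin.castAdd 1 a = Fin.castAdd 1 b) ↔ a = b := by
    intro a b; simp [Fin.ext_iff]
  have f2 : ∀ (a : Fin r) (z : Fin 1), Fin.castAdd 1 a ≠ Fin.natAdd r z := by
    intro a z; simp [Fin.ext_iff]; omega
  have f3 : ∀ z w : Fin 1, Fin.natAdd r z = Fin.natAdd r w := by
    intro z w; simp [Fin.ext_iff]
  show embMat (Matrix.diagonal _) = Matrix.diagonal _
  ext p q
  obtain ⟨p', rfl⟩ := finSumFinEquiv.surjective p
  obtain ⟨q', rfl⟩ := finSumFinEquiv.surjective q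
  rcases p' with a | z <;> rcases q' with b | w <;>
    simp [embMat, Matrix.submatrix_apply, fromBlocks, Matrix.diagonal_apply, f1, f2, f3,
      Ne.symm (f2 _ _), Matrix.one_apply]

lemma embed_genSet {A : GL (Fin r) ℤ} (hA : A ∈ genSet r) : embed A ∈ genSet (r+1) := by
  rcases hA with ⟨i, j, h, rfl⟩ | ⟨i, rfl⟩
  · left
    have h' : (finSumFinEquiv (Sum.inl i) : Fin (r+1)) ≠ finSumFinEquiv (Sum.inl j) := by
      intro hEq; exact h (Sum.inl.inj (finSumFinEquiv.injective hEq))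
    refine ⟨_, _, h', ?_⟩
    rw [map_pow]
    congr 1
    ext1
    show embMat ((X i j h).val) = (X _ _ h').val
    exact embed_transvection i j h 1
  · exact Or.inr ⟨finSumFinEquiv (Sum.inl i), Units.ext (embed_T_mat i)⟩

lemma embed_mem_H {B : GL (Fin r) ℤ} (hB : B ∈ H r) : embed B ∈ H (r+1) := by
  refine Subgroup.closure_induction (p := fun x _ => embed x ∈ H (r+1))
    (fun x hx => Subgroup.subset_closure (embed_genSet hx))
    (by show embed (1 : GL (Fin r) ℤ) ∈ H (r+1); rw [_root_.map_one]; exact one_mem _)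
    (fun x y _ _ hx hy => by
      show embed (x*y) ∈ H (r+1); rw [_root_.map_mul]; exact mul_mem hx hy)
    (fun x _ hx => by
      show embed x⁻¹ ∈ H (r+1); rw [_root_.map_inv]; exact inv_mem hx) hB

lemma block_mem (M : GL (Fin (r+1)) ℤ) (hM : M ∈ Gamma2 (r+1))
    (h11 : M.val (Fin.last r) (Fin.last r) = 1)
    (hcol : ∀ k, k ≠ Fin.last r → M.val k (Fin.last r) = 0)
    (hrow : ∀ k, k ≠ Fin.last r → M.val (Fin.last r) k = 0)
    (IH : ∀ B : GL (Fin r) ℤ, B ∈ Gamma2 r → B ∈ H r) :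
    M ∈ H (r+1) := by
  have f2 : ∀ (a : Fin r) (z : Fin 1), Fin.castAdd 1 a ≠ Fin.natAdd r z := by
    intro a z; simp [Fin.ext_iff]; omega
  have hlast : ∀ z : Fin 1, finSumFinEquiv (Sum.inr z) = Fin.last r := by
    intro z; rw [Subsingleton.elim z 0]; exact finSum_inr_eq_last
  have hne : ∀ a : Fin r, finSumFinEquiv (Sum.inl a) ≠ Fin.last r := by
    intro a hEq
    rw [← finSum_inr_eq_last] at hEq
    exact (f2 a 0) ((finSumFinEquiv_apply_left a) ▸ (finSumFinEquiv_apply_right (0:Fin 1)) ▸ hEq)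
  set Bmat : Matrix (Fin r) (Fin r) ℤ :=
    M.val.submatrix (fun i => finSumFinEquiv (Sum.inl i)) (fun j => finSumFinEquiv (Sum.inl j))
    with hBmat
  have hMB : M.val = embMat Bmat := by
    ext p q
    obtain ⟨p', rfl⟩ := finSumFinEquiv.surjective p
    obtain ⟨q', rfl⟩ := finSumFinEquiv.surjective q
    rcases p' with a | z <;> rcases q' with b | w
    · simp [embMat, Matrix.submatrix_apply, fromBlocks, hBmat]
    · rw [hlast w, hcol _ (hne a)]
      simp [embMat, Matrix.submatrix_apply, fromBlocks]
    · rw [hlast z, hrow _ (hne b)]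
      simp [embMat, Matrix.submatrix_apply, fromBlocks]
    · rw [hlast z, hlast w, h11]
      simp [embMat, Matrix.submatrix_apply, fromBlocks, Matrix.one_apply,
        Subsingleton.elim z w]
  have hdetM : IsUnit (M.val).det := (Matrix.isUnit_iff_isUnit_det _).1 ⟨M, rfl⟩
  have hdetB : IsUnit Bmat.det := by
    have : (M.val).det = Bmat.det := by
      rw [hMB, embMat]
      rw [show (⇑finSumFinEquiv.symm : Fin (r+1) → Fin r ⊕ Fin 1)
        = ⇑(finSumFinEquiv.symm : Fin (r+1) ≃ Fin r ⊕ Fin 1) from rfl]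
      rw [Matrix.det_submatrix_equiv_self, Matrix.det_fromBlocks_zero₁₂]
      simp
    rwa [this] at hdetM
  have hBu : IsUnit Bmat := (Matrix.isUnit_iff_isUnit_det _).2 hdetB
  set Bu : GL (Fin r) ℤ := hBu.unit with hBudef
  have hBuval : Bu.val = Bmat := hBu.unit_spec
  have hBuG : Bu ∈ Gamma2 r := by
    rw [mem_gamma2_iff]
    constructor
    · intro i
      rw [hBuval, hBmat]
      exact odd_diag hM _
    · intro i j hij
      rw [hBuval, hBmat]
      refine even_off hM ?_
      intro hEq; exact hij (Sum.inl.inj (finSumFinEquiv.injective hEq))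
  have : embed Bu = M := by
    ext1
    rw [embed_val, hBuval, ← hMB]
  rw [← this]
  exact embed_mem_H (IH Bu hBuG)

lemma gamma2_le_H : ∀ r, Gamma2 r ≤ H r := by
  intro r
  induction r with
  | zero =>
    intro A _
    have : A = 1 := by
      ext1; ext i j; exact i.elim0
    rw [this]; exact one_mem _
  | succ r IH =>
    intro A hA
    obtain ⟨P, hP, Q, hQ, h11, hcol, hrow⟩ := reduce A hA
    have hMG : P*A*Q ∈ Gamma2 (r+1) :=
      mul_mem (mul_mem (H_le_gamma2 hP) hA) (H_le_gamma2 hQ)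
    have hMH := block_mem (P*A*Q) hMG h11 hcol hrow (fun B hB => IH hB)
    have hAeq : A = P⁻¹ * (P*A*Q) * Q⁻¹ := by group
    rw [hAeq]
    exact mul_mem (mul_mem (inv_mem hP) hMH) (inv_mem hQ)

end G2

theorem gamma2_generated_by_squares_and_diagonal (r : ℕ) :
    Subgroup.closure
      ({A | ∃ i j : Fin r, ∃ h : i ≠ j, A = (X i j h).toGL ^ 2} ∪
       {A | ∃ i : Fin r, A = T i}) = Gamma2 r :=
  le_antisymm G2.H_le_gamma2 (G2.gamma2_le_H r)
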